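/- Let n be a positive integer, let X be an invertible n×n complex matrix, and let α ∈ ℝ. Then |Tr(X)|² ≤ Tr(|X|^(2α)) · Tr(|X|^(2(1−α))), where |X| = (X*X)^(1/2) and real powers of the positive definite matrix |X| are defined via the functional calculus. -/

import Mathlib

open scoped ComplexOrder Matrix

/-- The absolute value `|X| = (X*X)^(1/2)` of a square complex matrix. -/
noncomputable def matrixAbs {n : ℕ} (X : Matrix (Fin n) (Fin n) ℂ) :
    Matrix (Fin n) (Fin n) ℂ :=
  (Matrix.posSemidef_conjTranspose_mul_self X).1.eigenvectorUnitary.1 *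
    Matrix.diagonal ((↑) ∘ (√·) ∘ (Matrix.posSemidef_conjTranspose_mul_self X).1.eigenvalues) *
    (star (Matrix.posSemidef_conjTranspose_mul_self X).1.eigenvectorUnitary : Matrix (Fin n) (Fin n) ℂ)

/-- The real power `P^r` of a (positive definite) matrix via the functional calculus. -/
noncomputable def matrixRpow {n : ℕ} (P : Matrix (Fin n) (Fin n) ℂ) (r : ℝ) :
    Matrix (Fin n) (Fin n) ℂ :=
  cfc (fun x : ℝ => x ^ r) P

lemma aux_posDef_of_isUnit {n : ℕ} {A : Matrix (Fin n) (Fin n) ℂ}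
    (hA : A.PosSemidef) (h : IsUnit A) : A.PosDef := by
  exact hA.posDef_iff_isUnit.mpr h

/-- `|Tr(X)|² ≤ Tr(|X|^(2α)) · Tr(|X|^(2(1−α)))` for `X` invertible and any real `α`. -/
theorem stmt_17 (n : ℕ) (hn : 0 < n) (X : Matrix (Fin n) (Fin n) ℂ)
    (hX : IsUnit X) (α : ℝ) :
    (‖X.trace‖ : ℂ) ^ 2 ≤
      (matrixRpow (matrixAbs X) (2 * α)).trace *
        (matrixRpow (matrixAbs X) (2 * (1 - α))).trace := by
  classical
  have hpsd := Matrix.posSemidef_conjTranspose_mul_self X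
  set P := matrixAbs X with hPdef
  have hPcfc : P = cfc Real.sqrt (Xᴴ * X) := (hpsd.1.cfc_eq _).symm
  have hPsd : P.PosSemidef := by
    rw [hPcfc]; open scoped MatrixOrder in exact Matrix.nonneg_iff_posSemidef.mp (cfc_nonneg fun x _ => Real.sqrt_nonneg x)
  have hPP : P * P = Xᴴ * X := by
    rw [hPcfc, ← cfc_mul Real.sqrt Real.sqrt (Xᴴ * X)]
    conv_rhs => rw [← cfc_id' ℝ (Xᴴ * X) (ha := hpsd.1)]
    refine cfc_congr fun x hx => ?_
    open scoped MatrixOrder in exact Real.mul_self_sqrt (spectrum_nonneg_of_nonneg hpsd.nonneg hx)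
  have hPunit : IsUnit P := by
    rw [Matrix.isUnit_iff_isUnit_det]
    have : IsUnit (P.det * P.det) := by
      rw [← Matrix.det_mul, hPP, Matrix.det_mul, Matrix.det_conjTranspose]
      exact ((Matrix.isUnit_iff_isUnit_det X).mp hX).star.mul
        ((Matrix.isUnit_iff_isUnit_det X).mp hX)
    exact isUnit_of_mul_isUnit_left this
  have hPdet : IsUnit P.det := (Matrix.isUnit_iff_isUnit_det P).mp hPunit
  have hP : P.PosDef := aux_posDef_of_isUnit hPsd hPunit
  have hPh : P.IsHermitian := hPsd.1
  set d : Fin n → ℝ := hPh.eigenvalues with hd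
  have hdpos : ∀ i, 0 < d i := fun i => hP.eigenvalues_pos i
  set U : Matrix (Fin n) (Fin n) ℂ := (hPh.eigenvectorUnitary : Matrix (Fin n) (Fin n) ℂ) with hU
  have hUU : star U * U = 1 := Matrix.mem_unitaryGroup_iff'.mp (hPh.eigenvectorUnitary).2
  have hUU' : U * star U = 1 := Matrix.mem_unitaryGroup_iff.mp (hPh.eigenvectorUnitary).2
  have htrace : ∀ r : ℝ, (matrixRpow P r).trace = ((∑ i, d i ^ r : ℝ) : ℂ) := by
    intro r
    rw [matrixRpow, hPh.cfc_eq, Matrix.IsHermitian.cfc, Unitary.conjStarAlgAut_apply, Matrix.trace_mul_cycle,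
      hUU, one_mul,
      Matrix.trace_diagonal]
    push_cast
    rfl
  -- the polar part
  set W : Matrix (Fin n) (Fin n) ℂ := X * P⁻¹ with hWdef
  have hXW : X = W * P := by
    rw [hWdef, Matrix.mul_assoc, Matrix.nonsing_inv_mul P hPdet, Matrix.mul_one]
  have hPinvH : star P⁻¹ = P⁻¹ := by
    rw [Matrix.star_eq_conjTranspose, Matrix.conjTranspose_nonsing_inv, hPh.eq]
  have hWW : star W * W = 1 := by
    rw [hWdef, StarMul.star_mul, hPinvH, Matrix.star_eq_conjTranspose]
    calc P⁻¹ * Xᴴ * (X * P⁻¹) = P⁻¹ * (Xᴴ * X) * P⁻¹ := by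
          simp only [Matrix.mul_assoc]
      _ = P⁻¹ * (P * P) * P⁻¹ := by rw [hPP]
      _ = (P⁻¹ * P) * (P * P⁻¹) := by simp only [Matrix.mul_assoc]
      _ = 1 := by rw [Matrix.nonsing_inv_mul P hPdet, Matrix.mul_nonsing_inv P hPdet, one_mul]
  set V : Matrix (Fin n) (Fin n) ℂ := star U * W * U with hVdef
  have hVV : star V * V = 1 := by
    rw [hVdef]
    simp only [StarMul.star_mul, star_star]
    calc star U * (star W * U) * (star U * W * U)
        = star U * star W * (U * star U) * W * U := by simp only [Matrix.mul_assoc]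
      _ = star U * (star W * W) * U := by rw [hUU']; simp only [Matrix.mul_one, Matrix.mul_assoc]
      _ = 1 := by rw [hWW, Matrix.mul_one, hUU]
  have hXtr : X.trace = ∑ i, V i i * (d i : ℂ) := by
    have hspec : P = U * Matrix.diagonal (RCLike.ofReal ∘ d) * star U := hPh.spectral_theorem
    rw [hXW, hspec]
    rw [show W * (U * Matrix.diagonal (RCLike.ofReal ∘ d) * star U)
        = (W * U * Matrix.diagonal (RCLike.ofReal ∘ d)) * star U by simp only [Matrix.mul_assoc]]
    rw [Matrix.trace_mul_comm]
    rw [show star U * (W * U * Matrix.diagonal (RCLike.ofReal ∘ d))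
        = V * Matrix.diagonal (RCLike.ofReal ∘ d) by rw [hVdef]; simp only [Matrix.mul_assoc]]
    simp [Matrix.trace, Matrix.diag, Matrix.mul_diagonal]
  have hVcol : ∀ i, ‖V i i‖ ≤ 1 := by
    intro i
    have h1 : (star V * V) i i = 1 := by rw [hVV]; simp
    have h2 : ∑ k, (‖V k i‖ ^ 2 : ℝ) = 1 := by
      have : (star V * V) i i = ∑ k, ((‖V k i‖ ^ 2 : ℝ) : ℂ) := by
        simp [Matrix.mul_apply, Matrix.star_apply, Complex.star_def,
          Complex.conj_mul', ← Complex.normSq_eq_norm_sq, Complex.normSq_eq_conj_mul_self]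
      rw [this] at h1
      exact_mod_cast h1
    have h3 : ‖V i i‖ ^ 2 ≤ 1 := by
      rw [← h2]
      exact Finset.single_le_sum (f := fun k => (‖V k i‖ ^ 2 : ℝ))
        (fun k _ => sq_nonneg _) (Finset.mem_univ i)
    nlinarith [norm_nonneg (V i i)]
  -- numeric part
  set a : Fin n → ℝ := fun i => ‖V i i‖ with ha
  have hr2 : ∀ (x β : ℝ), 0 < x → (x ^ β) ^ 2 = x ^ (2 * β) := by
    intro x β hx
    rw [← Real.rpow_natCast (x ^ β) 2, ← Real.rpow_mul hx.le]
    norm_num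
    ring_nf
  have h1 : ‖X.trace‖ ≤ ∑ i, a i * d i := by
    rw [hXtr]
    refine (norm_sum_le _ _).trans (le_of_eq ?_)
    refine Finset.sum_congr rfl fun i _ => ?_
    rw [norm_mul, Complex.norm_real, Real.norm_eq_abs, abs_of_pos (hdpos i)]
  have heq : ∑ i, a i * d i = ∑ i, (a i * d i ^ α) * (d i ^ (1 - α)) := by
    refine Finset.sum_congr rfl fun i _ => ?_
    rw [mul_assoc, ← Real.rpow_add (hdpos i)]
    norm_num
  have h3 := Finset.sum_mul_sq_le_sq_mul_sq Finset.univ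
    (fun i => a i * d i ^ α) (fun i => d i ^ (1 - α))
  have h4 : ∑ i, (a i * d i ^ α) ^ 2 ≤ ∑ i, d i ^ (2 * α) := by
    refine Finset.sum_le_sum fun i _ => ?_
    rw [mul_pow, hr2 _ _ (hdpos i)]
    have ha2 : a i ^ 2 ≤ 1 := by
      have := hVcol i
      nlinarith [norm_nonneg (V i i)]
    nlinarith [Real.rpow_pos_of_pos (hdpos i) (2 * α)]
  have h5 : ∑ i, (d i ^ (1 - α)) ^ 2 = ∑ i, d i ^ (2 * (1 - α)) :=
    Finset.sum_congr rfl fun i _ => hr2 _ _ (hdpos i)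
  have hreal : ‖X.trace‖ ^ 2 ≤ (∑ i, d i ^ (2 * α)) * (∑ i, d i ^ (2 * (1 - α))) := by
    calc ‖X.trace‖ ^ 2 ≤ (∑ i, a i * d i) ^ 2 :=
          pow_le_pow_left₀ (norm_nonneg _) h1 2
      _ = (∑ i, (a i * d i ^ α) * (d i ^ (1 - α))) ^ 2 := by rw [heq]
      _ ≤ (∑ i, (a i * d i ^ α) ^ 2) * (∑ i, (d i ^ (1 - α)) ^ 2) := h3
      _ ≤ (∑ i, d i ^ (2 * α)) * (∑ i, d i ^ (2 * (1 - α))) := by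
          rw [h5]
          refine mul_le_mul_of_nonneg_right h4 ?_
          exact Finset.sum_nonneg fun i _ => (Real.rpow_pos_of_pos (hdpos i) _).le
  rw [htrace, htrace, ← Complex.ofReal_mul,
    show (‖X.trace‖ : ℂ) ^ 2 = ((‖X.trace‖ ^ 2 : ℝ) : ℂ) by push_cast; ring]
  exact_mod_cast hreal
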